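/- Let α ∈ (0,1), T > 0, m, n > 0, and w ∈ L^∞((0,T]) a nonnegative function satisfying w(t) ≤ m + n ∫_0^t (t-τ)^{α-1} w(τ) dτ for all t ∈ (0,T]. Then w(t) ≤ m E_α(n Γ(α) t^α) for all t ∈ (0,T], where E_α(z) = Σ_{k≥0} z^k / Γ(αk+1). -/

import Mathlib

open MeasureTheory intervalIntegral

/-- The one-parameter Mittag-Leffler function `E_α(z) = ∑_{k≥0} z^k / Γ(αk + 1)`. -/
noncomputable def mittagLefflerOne (α z : ℝ) : ℝ :=
  ∑' k : ℕ, z ^ k / Real.Gamma (α * k + 1)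

set_option maxHeartbeats 1000000 in
lemma gw_ml_summable {α x : ℝ} (hα : 0 < α) (hx : 0 ≤ x) :
    Summable (fun k : ℕ => x ^ k / Real.Gamma (α * k + 1)) := by
  have hΓ : ∀ k : ℕ, 0 < Real.Gamma (α * k + 1) := fun k => by positivity
  set M : ℝ := (2 * x + 1) ^ α⁻¹ with hMdef
  have hx1 : (1:ℝ) ≤ 2 * x + 1 := by linarith
  have hM1 : 1 ≤ M := Real.one_le_rpow hx1 (by positivity)
  have hM0 : 0 < M := by linarith
  have hMα : M ^ α = 2 * x + 1 := Real.rpow_inv_rpow (by linarith) hα.ne'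
  obtain ⟨k0, hk0⟩ : ∃ k0 : ℕ, 1 ≤ α * k0 := by
    obtain ⟨k0, hk⟩ := exists_nat_ge α⁻¹
    refine ⟨k0, ?_⟩
    have := mul_le_mul_of_nonneg_left hk hα.le
    rwa [mul_inv_cancel₀ hα.ne'] at this
  have key : ∀ k : ℕ, k0 ≤ k → x ^ k / Real.Gamma (α * k + 1) ≤ (Real.exp M * M) * (1/2) ^ k := by
    intro k hk
    have hαk : 1 ≤ α * k := hk0.trans (by
      have : (k0:ℝ) ≤ k := Nat.cast_le.2 hk
      nlinarith)
    set N := ⌊α * (k:ℝ)⌋₊ with hNdef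
    have hNle : (N:ℝ) ≤ α * k := Nat.floor_le (by positivity)
    have hltN : α * k < N + 1 := Nat.lt_floor_add_one _
    have hΓmono : Real.Gamma ((N:ℝ) + 1) ≤ Real.Gamma (α * k + 1) := by
      have h1 : (1:ℕ) ≤ N := Nat.le_floor (by exact_mod_cast hαk)
      have h2 : ((N:ℝ) + 1) ∈ Set.Ici (2:ℝ) := by
        simp only [Set.mem_Ici]
        have : (1:ℝ) ≤ N := by exact_mod_cast h1
        linarith
      have h3 : (α * k + 1) ∈ Set.Ici (2:ℝ) := by simp only [Set.mem_Ici]; linarith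
      exact Real.Gamma_strictMonoOn_Ici.monotoneOn h2 h3 (by linarith)
    have hfact : Real.Gamma ((N:ℝ) + 1) = N.factorial := by
      exact_mod_cast Real.Gamma_nat_eq_factorial N
    have hfac2 : M ^ (α * k - 1) / Real.exp M ≤ Real.Gamma (α * k + 1) := by
      have h4 : M ^ N / N.factorial ≤ Real.exp M := Real.pow_div_factorial_le_exp (x := M) hM0.le N
      have h5 : M ^ (α * k - 1) ≤ M ^ N := by
        rw [← Real.rpow_natCast M N]
        exact Real.rpow_le_rpow_of_exponent_le hM1 (by linarith)
      have hNpos : (0:ℝ) < N.factorial := by exact_mod_cast N.factorial_pos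
      rw [div_le_iff₀ hNpos] at h4
      rw [div_le_iff₀ (Real.exp_pos M)]
      have h6 : (N.factorial : ℝ) ≤ Real.Gamma (α * k + 1) := hfact ▸ hΓmono
      nlinarith [Real.exp_pos M]
    have hMk : M ^ (α * k - 1) = (2 * x + 1) ^ k / M := by
      rw [Real.rpow_sub hM0, Real.rpow_one, Real.rpow_mul hM0.le, hMα, Real.rpow_natCast]
    have hden : (2 * x + 1) ^ k / M / Real.exp M ≤ Real.Gamma (α * k + 1) := by
      rw [← hMk]; exact hfac2
    have hpos : (0:ℝ) < (2 * x + 1) ^ k / M / Real.exp M := by positivity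
    calc x ^ k / Real.Gamma (α * k + 1)
        ≤ x ^ k / ((2 * x + 1) ^ k / M / Real.exp M) := by
          apply div_le_div_of_nonneg_left (by positivity) hpos hden
      _ = (Real.exp M * M) * (x / (2 * x + 1)) ^ k := by
          field_simp
          ring_nf
          rw [inv_pow, mul_assoc, inv_mul_cancel₀ (pow_ne_zero k (by positivity : (1 + x * 2 : ℝ) ≠ 0)), mul_one]
      _ ≤ (Real.exp M * M) * (1/2) ^ k := by
          apply mul_le_mul_of_nonneg_left _ (by positivity)
          apply pow_le_pow_left₀ (by positivity) _ k
          rw [div_le_div_iff₀ (by linarith) (by norm_num)]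
          linarith
  have hgeo : Summable (fun k : ℕ => (Real.exp M * M) * (1/2) ^ k) :=
    (summable_geometric_of_lt_one (by norm_num) (by norm_num)).mul_left _
  rw [← summable_nat_add_iff k0]
  refine Summable.of_nonneg_of_le (fun k => ?_) (fun k => key (k + k0) (Nat.le_add_left _ _))
    ((summable_nat_add_iff k0).2 hgeo)
  have := hΓ (k + k0)
  positivity

lemma gw_beta_moment {a b t : ℝ} (ha : 0 < a) (hb : 0 < b) (ht : 0 < t) :
    ∫ x in (0:ℝ)..t, (t - x) ^ (a - 1) * x ^ (b - 1) =
      Real.Gamma a * Real.Gamma b / Real.Gamma (a + b) * t ^ (a + b - 1) := by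
  have h1 := Complex.betaIntegral_scaled (b:ℂ) (a:ℂ) ht
  have h2 := Complex.Gamma_mul_Gamma_eq_betaIntegral
    (s := (b:ℂ)) (t := (a:ℂ)) (by simpa using hb) (by simpa using ha)
  have hGab : Complex.Gamma ((b:ℂ) + (a:ℂ)) ≠ 0 := by
    rw [← Complex.ofReal_add, Complex.Gamma_ofReal]
    exact_mod_cast (Real.Gamma_pos_of_pos (by linarith)).ne'
  have hbeta : Complex.betaIntegral (b:ℂ) (a:ℂ)
      = Complex.Gamma (b:ℂ) * Complex.Gamma (a:ℂ) / Complex.Gamma ((b:ℂ) + (a:ℂ)) := by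
    rw [eq_div_iff hGab, mul_comm (Complex.betaIntegral _ _), ← h2]
  have h4 : (∫ x in (0:ℝ)..t, (x:ℂ) ^ ((b:ℂ) - 1) * ((t:ℂ) - (x:ℂ)) ^ ((a:ℂ) - 1))
      = ((∫ x in (0:ℝ)..t, (t - x) ^ (a - 1) * x ^ (b - 1) : ℝ) : ℂ) := by
    rw [← intervalIntegral.integral_ofReal]
    apply intervalIntegral.integral_congr
    intro x hx
    rw [Set.uIcc_of_le ht.le] at hx
    have hx0 : 0 ≤ x := hx.1
    have hx1 : 0 ≤ t - x := by linarith [hx.2]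
    simp only [Complex.ofReal_mul]
    rw [Complex.ofReal_cpow hx1, Complex.ofReal_cpow hx0]
    push_cast
    ring
  rw [h4, hbeta] at h1
  have h5 : ((t:ℂ)) ^ ((b:ℂ) + (a:ℂ) - 1) = ((t ^ (a + b - 1) : ℝ) : ℂ) := by
    rw [Complex.ofReal_cpow ht.le]
    push_cast
    ring_nf
  rw [h5] at h1
  have h6 : Complex.Gamma (b:ℂ) * Complex.Gamma (a:ℂ) / Complex.Gamma ((b:ℂ) + (a:ℂ))
      = ((Real.Gamma a * Real.Gamma b / Real.Gamma (a + b) : ℝ) : ℂ) := by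
    rw [← Complex.ofReal_add, Complex.Gamma_ofReal, Complex.Gamma_ofReal, Complex.Gamma_ofReal]
    rw [add_comm b a]
    push_cast
    ring
  rw [h6, ← Complex.ofReal_mul] at h1
  have := Complex.ofReal_injective (by exact_mod_cast h1 :
    ((∫ x in (0:ℝ)..t, (t - x) ^ (a - 1) * x ^ (b - 1) : ℝ) : ℂ)
      = ((t ^ (a + b - 1) * (Real.Gamma a * Real.Gamma b / Real.Gamma (a + b)) : ℝ) : ℂ))
  rw [this]; ring

lemma gw_ker_int {α t : ℝ} (hα : 0 < α) (ht : 0 < t) {f : ℝ → ℝ} (hf : Measurable f)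
    {C : ℝ} (hC : ∀ x ∈ Set.Ioc (0:ℝ) t, |f x| ≤ C) :
    IntervalIntegrable (fun x => (t - x) ^ (α - 1) * f x) volume 0 t := by
  have hker : IntervalIntegrable (fun x : ℝ => (t - x) ^ (α - 1)) volume 0 t := by
    have := ((intervalIntegral.intervalIntegrable_rpow' (r := α - 1) (a := 0) (b := t)
      (by linarith)).comp_sub_left t).symm
    simpa using this
  have hkm : Measurable fun x : ℝ => (t - x) ^ (α - 1) := by fun_prop
  rw [intervalIntegrable_iff_integrableOn_Ioc_of_le ht.le] at hker ⊢
  refine Integrable.mono' (hker.const_mul C) ((hkm.mul hf).aestronglyMeasurable) ?_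
  refine (ae_restrict_iff' measurableSet_Ioc).2 (ae_of_all _ fun x hx => ?_)
  have h1 : 0 ≤ (t - x) ^ (α - 1) := Real.rpow_nonneg (by linarith [hx.2]) _
  rw [Real.norm_eq_abs, abs_mul, abs_of_nonneg h1]
  calc (t - x) ^ (α - 1) * |f x| ≤ (t - x) ^ (α - 1) * C :=
        mul_le_mul_of_nonneg_left (hC x hx) h1
    _ = C * (t - x) ^ (α - 1) := mul_comm _ _

set_option maxHeartbeats 1000000 in
theorem stmt_10 (α T m n : ℝ) (hα : α ∈ Set.Ioo (0:ℝ) 1) (hT : 0 < T)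
    (hm : 0 < m) (hn : 0 < n) (w : ℝ → ℝ) (hmeas : Measurable w)
    (hnonneg : ∀ t ∈ Set.Ioc (0:ℝ) T, 0 ≤ w t)
    (hbdd : ∃ C : ℝ, ∀ t ∈ Set.Ioc (0:ℝ) T, w t ≤ C)
    (hineq : ∀ t ∈ Set.Ioc (0:ℝ) T,
      w t ≤ m + n * ∫ τ in (0:ℝ)..t, (t - τ) ^ (α - 1) * w τ) :
    ∀ t ∈ Set.Ioc (0:ℝ) T,
      w t ≤ m * mittagLefflerOne α (n * Real.Gamma α * t ^ α) := by
  obtain ⟨hα0, hα1⟩ := hα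
  obtain ⟨C0, hC0⟩ := hbdd
  have hGpos : 0 < Real.Gamma α := Real.Gamma_pos_of_pos hα0
  set G := Real.Gamma α with hGdef
  set C := max C0 1 with hCdef
  have hC1 : (1:ℝ) ≤ C := le_max_right _ _
  have hCpos : 0 < C := by linarith
  have hCw : ∀ t ∈ Set.Ioc (0:ℝ) T, w t ≤ C := fun t ht => (hC0 t ht).trans (le_max_left _ _)
  set S : ℕ → ℝ → ℝ := fun k t => (n * G * t ^ α) ^ k / Real.Gamma (α * k + 1) with hSdef
  have hΓ : ∀ k : ℕ, 0 < Real.Gamma (α * k + 1) := fun k => by positivity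
  have hSnn : ∀ (k : ℕ) (τ : ℝ), 0 ≤ τ → 0 ≤ S k τ := by
    intro k τ hτ
    have h1 := hΓ k
    have h2 : 0 ≤ n * G * τ ^ α := by positivity
    simp only [hSdef]
    positivity
  have hS0 : ∀ τ : ℝ, S 0 τ = 1 := by
    intro τ; simp [hSdef, Real.Gamma_one]
  have hSmono : ∀ (k : ℕ) (τ t' : ℝ), 0 ≤ τ → τ ≤ t' → S k τ ≤ S k t' := by
    intro k τ t' h0 h1
    simp only [hSdef]
    have h2 : τ ^ α ≤ t' ^ α := Real.rpow_le_rpow h0 h1 hα0.le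
    have h3 : 0 ≤ n * G * τ ^ α := by positivity
    gcongr
  have hSmeas : ∀ k : ℕ, Measurable (S k) := by
    intro k
    simp only [hSdef]
    fun_prop
  have hstep : ∀ (k : ℕ), ∀ t ∈ Set.Ioc (0:ℝ) T,
      ∫ τ in (0:ℝ)..t, (t - τ) ^ (α - 1) * S k τ = S (k + 1) t / n := by
    intro k t ht
    have ht0 : 0 < t := ht.1
    have hb : 0 < α * (k:ℝ) + 1 := by positivity
    have h1 : ∫ τ in (0:ℝ)..t, (t - τ) ^ (α - 1) * S k τ
        = ((n * G) ^ k / Real.Gamma (α * k + 1))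
          * ∫ τ in (0:ℝ)..t, (t - τ) ^ (α - 1) * τ ^ ((α * (k:ℝ) + 1) - 1) := by
      rw [← intervalIntegral.integral_const_mul]
      apply intervalIntegral.integral_congr
      intro τ hτ
      rw [Set.uIcc_of_le ht0.le] at hτ
      have hτ0 : 0 ≤ τ := hτ.1
      have h2 : (n * G * τ ^ α) ^ k = (n * G) ^ k * τ ^ (α * (k:ℝ)) := by
        rw [mul_pow, Real.rpow_mul hτ0, Real.rpow_natCast]
      have h3 : (α * (k:ℝ) + 1) - 1 = α * (k:ℝ) := by ring
      simp only [hSdef]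
      rw [h3, h2]
      ring
    rw [h1, gw_beta_moment hα0 hb ht0]
    have e1 : α + (α * (k:ℝ) + 1) = α * ((k:ℝ) + 1) + 1 := by ring
    rw [e1]
    have e2 : α * ((k:ℝ) + 1) + 1 - 1 = α * ((k:ℝ) + 1) := by ring
    rw [e2]
    have h4 : t ^ (α * ((k:ℝ) + 1)) = (t ^ α) ^ (k + 1) := by
      rw [Real.rpow_mul ht0.le, ← Real.rpow_natCast (t ^ α) (k + 1)]
      push_cast
      try ring_nf
    simp only [hSdef]
    push_cast
    rw [h4]
    have hΓ1 := hΓ k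
    have hΓ2 := hΓ (k + 1)
    push_cast at hΓ1 hΓ2
    field_simp
    ring
  have key : ∀ (k : ℕ), ∀ t ∈ Set.Ioc (0:ℝ) T,
      w t ≤ m * ∑ j ∈ Finset.range k, S j t + C * S k t := by
    intro k
    induction k with
    | zero =>
      intro t ht
      simp only [Finset.range_zero, Finset.sum_empty, mul_zero, zero_add, hS0 t, mul_one]
      exact hCw t ht
    | succ k ih =>
      intro t ht
      obtain ⟨ht0, htT⟩ := ht
      have hsub : Set.Ioc (0:ℝ) t ⊆ Set.Ioc (0:ℝ) T := Set.Ioc_subset_Ioc_right htT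
      set g : ℝ → ℝ := fun τ => m * ∑ j ∈ Finset.range k, S j τ + C * S k τ with hgdef
      have hgmeas : Measurable g := by
        apply Measurable.add
        · exact (Finset.measurable_sum _ (fun j _ => hSmeas j)).const_mul m
        · exact (hSmeas k).const_mul C
      have hgnn : ∀ τ : ℝ, 0 ≤ τ → 0 ≤ g τ := by
        intro τ hτ
        have h1 : 0 ≤ ∑ j ∈ Finset.range k, S j τ := Finset.sum_nonneg fun j _ => hSnn j τ hτ
        have h2 := hSnn k τ hτ
        simp only [hgdef]
        positivity
      have hgB : ∀ x ∈ Set.Ioc (0:ℝ) t,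
          |g x| ≤ m * ∑ j ∈ Finset.range k, S j T + C * S k T := by
        intro x hx
        rw [abs_of_nonneg (hgnn x hx.1.le)]
        have h1 : ∀ j : ℕ, S j x ≤ S j T := fun j => hSmono j x T hx.1.le (hx.2.trans htT)
        exact add_le_add
          (mul_le_mul_of_nonneg_left (Finset.sum_le_sum fun j _ => h1 j) hm.le)
          (mul_le_mul_of_nonneg_left (h1 k) hCpos.le)
      have hint_w : IntervalIntegrable (fun τ => (t - τ) ^ (α - 1) * w τ) volume 0 t :=
        gw_ker_int hα0 ht0 hmeas (C := C) (fun x hx => by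
          rw [abs_of_nonneg (hnonneg x (hsub hx))]; exact hCw x (hsub hx))
      have hint_g : IntervalIntegrable (fun τ => (t - τ) ^ (α - 1) * g τ) volume 0 t :=
        gw_ker_int hα0 ht0 hgmeas hgB
      have hmono : (∫ τ in (0:ℝ)..t, (t - τ) ^ (α - 1) * w τ)
          ≤ ∫ τ in (0:ℝ)..t, (t - τ) ^ (α - 1) * g τ := by
        rw [intervalIntegral.integral_of_le ht0.le, intervalIntegral.integral_of_le ht0.le]
        refine setIntegral_mono_on
          ((intervalIntegrable_iff_integrableOn_Ioc_of_le ht0.le).1 hint_w)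
          ((intervalIntegrable_iff_integrableOn_Ioc_of_le ht0.le).1 hint_g)
          measurableSet_Ioc (fun x hx => ?_)
        exact mul_le_mul_of_nonneg_left (ih x (hsub hx))
          (Real.rpow_nonneg (by linarith [hx.2]) _)
      have hSj_int : ∀ j : ℕ,
          IntervalIntegrable (fun τ => (t - τ) ^ (α - 1) * S j τ) volume 0 t :=
        fun j => gw_ker_int hα0 ht0 (hSmeas j) (C := S j T) (fun x hx => by
          rw [abs_of_nonneg (hSnn j x hx.1.le)]
          exact hSmono j x T hx.1.le (hx.2.trans htT))
      have hcalc : (∫ τ in (0:ℝ)..t, (t - τ) ^ (α - 1) * g τ)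
          = m * ∑ j ∈ Finset.range k, (S (j + 1) t / n) + C * (S (k + 1) t / n) := by
        have e1 : ∀ τ : ℝ, (t - τ) ^ (α - 1) * g τ
            = m * (∑ j ∈ Finset.range k, (t - τ) ^ (α - 1) * S j τ)
              + C * ((t - τ) ^ (α - 1) * S k τ) := by
          intro τ
          simp only [hgdef]
          rw [mul_add, mul_left_comm ((t - τ) ^ (α - 1)) m,
            mul_left_comm ((t - τ) ^ (α - 1)) C, Finset.mul_sum]
        have hsum_int : IntervalIntegrable
            (fun τ => ∑ j ∈ Finset.range k, (t - τ) ^ (α - 1) * S j τ) volume 0 t := by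
          have h7 := IntervalIntegrable.sum (μ := volume) (a := (0:ℝ)) (b := t)
            (Finset.range k) (fun j (_ : j ∈ Finset.range k) => hSj_int j)
          have heq : (fun τ => ∑ j ∈ Finset.range k, (t - τ) ^ (α - 1) * S j τ)
              = ∑ j ∈ Finset.range k, fun τ => (t - τ) ^ (α - 1) * S j τ := by
            funext τ; simp
          rw [heq]; exact h7
        rw [intervalIntegral.integral_congr (fun τ _ => e1 τ)]
        rw [intervalIntegral.integral_add (hsum_int.const_mul m) ((hSj_int k).const_mul C)]
        rw [intervalIntegral.integral_const_mul, intervalIntegral.integral_const_mul,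
          intervalIntegral.integral_finset_sum (fun j _ => hSj_int j),
          hstep k t ⟨ht0, htT⟩]
        congr 1
        congr 1
        exact Finset.sum_congr rfl fun j _ => hstep j t ⟨ht0, htT⟩
      have hfin : w t ≤ m + n * (m * ∑ j ∈ Finset.range k, (S (j + 1) t / n)
          + C * (S (k + 1) t / n)) := by
        refine (hineq t ⟨ht0, htT⟩).trans ?_
        have := mul_le_mul_of_nonneg_left (hmono.trans_eq hcalc) hn.le
        linarith
      refine hfin.trans ?_
      rw [Finset.sum_range_succ' (fun j => S j t) k, hS0 t]
      have hsumdiv : ∑ j ∈ Finset.range k, (S (j + 1) t / n)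
          = (∑ j ∈ Finset.range k, S (j + 1) t) / n := by
        rw [Finset.sum_div]
      rw [hsumdiv]
      apply le_of_eq
      field_simp
      ring
  intro t ht
  have ht0 : 0 < t := ht.1
  have hx : 0 ≤ n * G * t ^ α := by positivity
  have hsum : Summable (fun k : ℕ => S k t) := gw_ml_summable hα0 hx
  have hml : mittagLefflerOne α (n * G * t ^ α) = ∑' k : ℕ, S k t := rfl
  have hle : ∀ k : ℕ, w t ≤ m * mittagLefflerOne α (n * G * t ^ α) + C * S k t := by
    intro k
    refine (key k t ht).trans (add_le_add_left ?_ _)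
    rw [hml]
    exact mul_le_mul_of_nonneg_left
      (Summable.sum_le_tsum (Finset.range k) (fun j _ => hSnn j t ht0.le) hsum) hm.le
  have hlim : Filter.Tendsto
      (fun k : ℕ => m * mittagLefflerOne α (n * G * t ^ α) + C * S k t)
      Filter.atTop (nhds (m * mittagLefflerOne α (n * G * t ^ α))) := by
    have h0 : Filter.Tendsto (fun k : ℕ => C * S k t) Filter.atTop (nhds 0) := by
      simpa using (hsum.tendsto_atTop_zero.const_mul C)
    simpa using Filter.Tendsto.const_add (m * mittagLefflerOne α (n * G * t ^ α)) h0
  exact ge_of_tendsto' hlim hle
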